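/- Suppose u^av solves the 1-D heat equation ∂_t u^av(x,t) = D⁻² ∂_{xx} u^av(x,t) on (0,1) with ∂_x u^av(0,t) = 0, u^av(1,t) = U^av(t), and Ĝ^av satisfies d/dt Ĝ^av(t) = H u^av(0,t). Then the transformed variable Ḡ^av(t) = Ĝ^av(t) + H ∫₀¹ D²(1−ξ) u^av(ξ,t) dξ satisfies d/dt Ḡ^av(t) = H U^av(t). -/

import Mathlib

open intervalIntegral

/-- Reduction transformation for the heat-PDE case (scalar `N = 1`):
if `uᵃᵛ` solves `∂_t u = D⁻² ∂_{xx} u` on `(0,1)` with `∂_x u(0,t) = 0`,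
`u(1,t) = Uᵃᵛ(t)`, and `d/dt Ĝᵃᵛ(t) = H u(0,t)`, then
`Ḡᵃᵛ(t) = Ĝᵃᵛ(t) + H ∫₀¹ D²(1-ξ) u(ξ,t) dξ` satisfies `d/dt Ḡᵃᵛ(t) = H Uᵃᵛ(t)`. -/
theorem heat_reduction_transformation
    (D H : ℝ) (hD : 0 < D)
    (u ux uxx : ℝ → ℝ → ℝ) (Uav Ghat : ℝ → ℝ)
    (hcu : Continuous fun p : ℝ × ℝ => u p.1 p.2)
    (hcux : Continuous fun p : ℝ × ℝ => ux p.1 p.2)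
    (hcuxx : Continuous fun p : ℝ × ℝ => uxx p.1 p.2)
    (hux : ∀ x t, HasDerivAt (fun ξ => u ξ t) (ux x t) x)
    (huxx : ∀ x t, HasDerivAt (fun ξ => ux ξ t) (uxx x t) x)
    (hheat : ∀ t, ∀ x ∈ Set.Icc (0 : ℝ) 1,
      HasDerivAt (fun τ => u x τ) ((D ^ 2)⁻¹ * uxx x t) t)
    (hbc0 : ∀ t, ux 0 t = 0)
    (hbc1 : ∀ t, u 1 t = Uav t)
    (hG : ∀ t, HasDerivAt Ghat (H * u 0 t) t) :
    ∀ t, HasDerivAt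
      (fun s => Ghat s + H * ∫ ξ in (0 : ℝ)..(1 : ℝ), D ^ 2 * (1 - ξ) * u ξ s)
      (H * Uav t) t := by
  intro t
  have hD2 : (D : ℝ) ^ 2 ≠ 0 := by positivity
  -- bound for uxx on the compact set [0,1] × [t-1, t+1]
  obtain ⟨M, hM⟩ : ∃ M, ∀ p ∈ (Set.Icc (0:ℝ) 1 ×ˢ Set.Icc (t-1) (t+1)),
      ‖(fun p : ℝ × ℝ => uxx p.1 p.2) p‖ ≤ M := by
    exact (IsCompact.exists_bound_of_continuousOn
      ((isCompact_Icc).prod isCompact_Icc) hcuxx.continuousOn)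
  -- derivative of the integral term
  have key : HasDerivAt (fun s => ∫ ξ in (0:ℝ)..1, D ^ 2 * (1 - ξ) * u ξ s)
      (∫ ξ in (0:ℝ)..1, D ^ 2 * (1 - ξ) * ((D ^ 2)⁻¹ * uxx ξ t)) t := by
    have h := intervalIntegral.hasDerivAt_integral_of_dominated_loc_of_deriv_le
      (F := fun s ξ => D ^ 2 * (1 - ξ) * u ξ s)
      (F' := fun s ξ => D ^ 2 * (1 - ξ) * ((D ^ 2)⁻¹ * uxx ξ s))
      (x₀ := t) (a := (0:ℝ)) (b := 1) (μ := MeasureTheory.volume)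
      (bound := fun _ => D ^ 2 * ((D ^ 2)⁻¹ * |M|))
      (s := Metric.ball t 1) (Metric.ball_mem_nhds t one_pos) ?_ ?_ ?_ ?_ ?_ ?_
    · exact h.2
    · filter_upwards with s
      exact (Continuous.aestronglyMeasurable (by fun_prop)).restrict
    · apply Continuous.intervalIntegrable; fun_prop
    · exact (Continuous.aestronglyMeasurable (by fun_prop)).restrict
    · filter_upwards with ξ hξ s hs
      have hξ' : ξ ∈ Set.Icc (0:ℝ) 1 := by
        simp only [Set.uIoc_of_le (zero_le_one)] at hξ
        exact ⟨le_of_lt hξ.1, hξ.2⟩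
      have hs' : s ∈ Set.Icc (t-1) (t+1) := by
        rw [Metric.mem_ball, Real.dist_eq, abs_sub_lt_iff] at hs
        constructor <;> linarith [hs.1, hs.2]
      have hb := hM (ξ, s) (Set.mk_mem_prod hξ' hs')
      simp only [norm_mul, Real.norm_eq_abs]
      have h1 : |1 - ξ| ≤ 1 := by
        rw [abs_le]; constructor <;> [linarith [hξ'.2]; linarith [hξ'.1]]
      have hM0 : |uxx ξ s| ≤ |M| := le_trans hb (le_abs_self M)
      calc |D ^ 2| * |1 - ξ| * (|(D ^ 2)⁻¹| * |uxx ξ s|)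
          ≤ |D ^ 2| * 1 * (|(D ^ 2)⁻¹| * |M|) := by
            apply mul_le_mul (by nlinarith [abs_nonneg (D^2), abs_nonneg (1-ξ)])
              (mul_le_mul le_rfl hM0 (abs_nonneg _) (abs_nonneg _))
              (by positivity) (by positivity)
        _ = D ^ 2 * ((D ^ 2)⁻¹ * |M|) := by
            rw [abs_of_nonneg (by positivity : (0:ℝ) ≤ D ^ 2),
              abs_of_nonneg (by positivity : (0:ℝ) ≤ (D ^ 2)⁻¹)]
            ring
    · apply Continuous.intervalIntegrable; fun_prop
    · filter_upwards with ξ hξ s _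
      have hξ' : ξ ∈ Set.Icc (0:ℝ) 1 := by
        simp only [Set.uIoc_of_le (zero_le_one)] at hξ
        exact ⟨le_of_lt hξ.1, hξ.2⟩
      exact ((hheat s ξ hξ').const_mul (D ^ 2 * (1 - ξ)))
  -- simplify the value of the derivative
  have hval : (∫ ξ in (0:ℝ)..1, D ^ 2 * (1 - ξ) * ((D ^ 2)⁻¹ * uxx ξ t))
      = Uav t - u 0 t := by
    have h1 : (∫ ξ in (0:ℝ)..1, D ^ 2 * (1 - ξ) * ((D ^ 2)⁻¹ * uxx ξ t))
        = ∫ ξ in (0:ℝ)..1, (1 - ξ) * uxx ξ t := by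
      apply intervalIntegral.integral_congr
      intro ξ _
      field_simp
    rw [h1]
    have hibp := intervalIntegral.integral_mul_deriv_eq_deriv_mul
      (a := (0:ℝ)) (b := 1)
      (u := fun ξ => 1 - ξ) (u' := fun _ => (-1 : ℝ))
      (v := fun ξ => ux ξ t) (v' := fun ξ => uxx ξ t)
      (fun x _ => ((hasDerivAt_id x).const_sub 1))
      (fun x _ => huxx x t)
      (by apply Continuous.intervalIntegrable; fun_prop)
      (by apply Continuous.intervalIntegrable; fun_prop)
    have hibp' : (∫ ξ in (0:ℝ)..1, (1 - ξ) * uxx ξ t)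
        = (1-(1:ℝ)) * ux 1 t - (1-(0:ℝ)) * ux 0 t - ∫ x in (0:ℝ)..1, (-1) * ux x t := hibp
    have hftc : (∫ ξ in (0:ℝ)..1, ux ξ t) = u 1 t - u 0 t :=
      intervalIntegral.integral_eq_sub_of_hasDerivAt (fun x _ => hux x t)
        (by apply Continuous.intervalIntegrable; fun_prop)
    have h2 : (∫ ξ in (0:ℝ)..1, (-1 : ℝ) * ux ξ t) = -(u 1 t - u 0 t) := by
      rw [← hftc, ← intervalIntegral.integral_neg]
      apply intervalIntegral.integral_congr; intro ξ _; ring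
    rw [hibp', h2, hbc0 t, hbc1 t]
    ring
  rw [hval] at key
  have := (hG t).add (key.const_mul H)
  rw [show H * Uav t = H * u 0 t + H * (Uav t - u 0 t) by ring]
  exact this
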